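/- Let A ∈ ℝ^{m×n}, let Q ∈ ℝ^{m×k} and P ∈ ℝ^{n×k} have orthonormal columns with orthonormal complements Q_⊥, P_⊥, and let Φ ∈ ℝ^{s×m}, Ψ ∈ ℝ^{s×n}. Set Φ₁ = ΦQ, Φ₂ = ΦQ_⊥, Ψ₁ = ΨP, Ψ₂ = ΨP_⊥, and suppose Φ₁ and Ψ₁ have full column rank k. Define C := Φ₁† (Φ A Ψᵀ) (Ψ₁†)ᵀ. Then C − Qᵀ A P = Φ₁† Φ₂ (Q_⊥ᵀ A P) + (Qᵀ A P_⊥) Ψ₂ᵀ (Ψ₁†)ᵀ + Φ₁† Φ₂ (Q_⊥ᵀ A P_⊥) Ψ₂ᵀ (Ψ₁†)ᵀ. -/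

import Mathlib

open Matrix Classical

/-- The Moore–Penrose pseudoinverse of a real matrix, defined via the four
Penrose conditions (which characterize it uniquely). -/
noncomputable def pinv {m n : ℕ} (A : Matrix (Fin m) (Fin n) ℝ) : Matrix (Fin n) (Fin m) ℝ :=
  if h : ∃ B : Matrix (Fin n) (Fin m) ℝ,
      A * B * A = A ∧ B * A * B = B ∧ (A * B)ᵀ = A * B ∧ (B * A)ᵀ = B * A
  then h.choose else 0

lemma gram_isUnit {m k : ℕ} (A : Matrix (Fin m) (Fin k) ℝ) (h : A.rank = k) :
    IsUnit (Aᵀ * A) := by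
  rw [← Matrix.mulVec_surjective_iff_isUnit]
  have hr : (Aᵀ * A).rank = k := by rw [Matrix.rank_transpose_mul_self, h]
  have htop : LinearMap.range (Aᵀ * A).mulVecLin = ⊤ := by
    apply Submodule.eq_top_of_finrank_eq
    simpa [Matrix.rank] using hr
  intro y
  have := LinearMap.range_eq_top.mp htop y
  obtain ⟨x, hx⟩ := this
  exact ⟨x, hx⟩

lemma pinv_left_inv {m k : ℕ} (A : Matrix (Fin m) (Fin k) ℝ) (h : A.rank = k) :
    pinv A * A = 1 := by
  have hG : IsUnit (Aᵀ * A) := gram_isUnit A h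
  obtain ⟨G, hGeq⟩ := hG
  have hGl : (↑G⁻¹ : Matrix (Fin k) (Fin k) ℝ) * (Aᵀ * A) = 1 := by
    rw [← hGeq]; exact G.inv_mul
  have hex : ∃ B : Matrix (Fin k) (Fin m) ℝ,
      A * B * A = A ∧ B * A * B = B ∧ (A * B)ᵀ = A * B ∧ (B * A)ᵀ = B * A := by
    refine ⟨(↑G⁻¹ : Matrix (Fin k) (Fin k) ℝ) * Aᵀ, ?_, ?_, ?_, ?_⟩
    · calc A * ((↑G⁻¹ : Matrix (Fin k) (Fin k) ℝ) * Aᵀ) * A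
          = A * ((↑G⁻¹ : Matrix (Fin k) (Fin k) ℝ) * (Aᵀ * A)) := by
            simp only [Matrix.mul_assoc]
        _ = A := by rw [hGl, Matrix.mul_one]
    · calc (↑G⁻¹ : Matrix (Fin k) (Fin k) ℝ) * Aᵀ * A * ((↑G⁻¹ : Matrix (Fin k) (Fin k) ℝ) * Aᵀ)
          = ((↑G⁻¹ : Matrix (Fin k) (Fin k) ℝ) * (Aᵀ * A)) * ((↑G⁻¹ : Matrix (Fin k) (Fin k) ℝ) * Aᵀ) := by
            simp only [Matrix.mul_assoc]
        _ = (↑G⁻¹ : Matrix (Fin k) (Fin k) ℝ) * Aᵀ := by rw [hGl, Matrix.one_mul]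
    · have hsym : ((↑G⁻¹ : Matrix (Fin k) (Fin k) ℝ))ᵀ = ↑G⁻¹ := by
        have h1 : (Aᵀ * A) * (↑G⁻¹ : Matrix (Fin k) (Fin k) ℝ) = 1 := by
          rw [← hGeq]; exact G.mul_inv
        have h2 : ((↑G⁻¹ : Matrix (Fin k) (Fin k) ℝ))ᵀ * (Aᵀ * A) = 1 := by
          have := congrArg Matrix.transpose h1
          simpa [Matrix.transpose_mul, Matrix.transpose_transpose, Matrix.mul_assoc] using this
        calc ((↑G⁻¹ : Matrix (Fin k) (Fin k) ℝ))ᵀ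
            = ((↑G⁻¹ : Matrix (Fin k) (Fin k) ℝ))ᵀ * ((Aᵀ * A) * ↑G⁻¹) := by rw [h1, Matrix.mul_one]
          _ = (((↑G⁻¹ : Matrix (Fin k) (Fin k) ℝ))ᵀ * (Aᵀ * A)) * ↑G⁻¹ := by simp only [Matrix.mul_assoc]
          _ = ↑G⁻¹ := by rw [h2, Matrix.one_mul]
      rw [Matrix.transpose_mul, Matrix.transpose_mul, Matrix.transpose_transpose, hsym,
        Matrix.mul_assoc]
    · rw [Matrix.mul_assoc, hGl]
      simp
  have hB := hex.choose_spec
  have hpinv : pinv A = hex.choose := by rw [pinv, dif_pos hex]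
  rw [hpinv]
  set B := hex.choose with hBdef
  obtain ⟨h1, _, _, _⟩ := hB
  calc B * A = ((↑G⁻¹ : Matrix (Fin k) (Fin k) ℝ) * (Aᵀ * A)) * (B * A) := by
        rw [hGl, Matrix.one_mul]
    _ = (↑G⁻¹ : Matrix (Fin k) (Fin k) ℝ) * Aᵀ * (A * B * A) := by
        simp only [Matrix.mul_assoc]
    _ = (↑G⁻¹ : Matrix (Fin k) (Fin k) ℝ) * (Aᵀ * A) := by rw [h1, Matrix.mul_assoc]
    _ = 1 := hGl

/-- Decomposition of the core-matrix approximation error. -/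
theorem stmt5 {m n k s : ℕ} (A : Matrix (Fin m) (Fin n) ℝ)
    (Q : Matrix (Fin m) (Fin k) ℝ) (Qp : Matrix (Fin m) (Fin (m - k)) ℝ)
    (P : Matrix (Fin n) (Fin k) ℝ) (Pp : Matrix (Fin n) (Fin (n - k)) ℝ)
    (Φ : Matrix (Fin s) (Fin m) ℝ) (Ψ : Matrix (Fin s) (Fin n) ℝ)
    (hQ : Qᵀ * Q = 1) (hQp : Qpᵀ * Qp = 1) (hQc : Q * Qᵀ + Qp * Qpᵀ = 1)
    (hP : Pᵀ * P = 1) (hPp : Ppᵀ * Pp = 1) (hPc : P * Pᵀ + Pp * Ppᵀ = 1)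
    (hΦrank : (Φ * Q).rank = k) (hΨrank : (Ψ * P).rank = k) :
    pinv (Φ * Q) * (Φ * A * Ψᵀ) * (pinv (Ψ * P))ᵀ - Qᵀ * A * P =
      pinv (Φ * Q) * (Φ * Qp) * (Qpᵀ * A * P)
        + (Qᵀ * A * Pp) * (Ψ * Pp)ᵀ * (pinv (Ψ * P))ᵀ
        + pinv (Φ * Q) * (Φ * Qp) * (Qpᵀ * A * Pp) * (Ψ * Pp)ᵀ * (pinv (Ψ * P))ᵀ := by
  set B1 := pinv (Φ * Q) with hB1
  set B2 := pinv (Ψ * P) with hB2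
  have h1 : B1 * (Φ * Q) = 1 := pinv_left_inv _ hΦrank
  have h2 : B2 * (Ψ * P) = 1 := pinv_left_inv _ hΨrank
  have h2' : (Ψ * P)ᵀ * B2ᵀ = 1 := by
    have := congrArg Matrix.transpose h2
    simpa using this
  have hΦd : Φ = Φ * Q * Qᵀ + Φ * Qp * Qpᵀ := by
    conv_rhs => rw [Matrix.mul_assoc Φ Q Qᵀ, Matrix.mul_assoc Φ Qp Qpᵀ, ← Matrix.mul_add, hQc,
      Matrix.mul_one]
  have hΨd : Ψᵀ = P * (Ψ * P)ᵀ + Pp * (Ψ * Pp)ᵀ := by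
    conv_rhs => rw [Matrix.transpose_mul, Matrix.transpose_mul,
      ← Matrix.mul_assoc P Pᵀ Ψᵀ, ← Matrix.mul_assoc Pp Ppᵀ Ψᵀ, ← Matrix.add_mul, hPc,
      Matrix.one_mul]
  have hL : B1 * Φ = Qᵀ + B1 * (Φ * Qp) * Qpᵀ := by
    conv_lhs => rw [hΦd]
    rw [Matrix.mul_add, ← Matrix.mul_assoc B1 (Φ * Q) Qᵀ, h1, Matrix.one_mul,
      ← Matrix.mul_assoc B1 (Φ * Qp) Qpᵀ]
  have hR : Ψᵀ * B2ᵀ = P + Pp * ((Ψ * Pp)ᵀ * B2ᵀ) := by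
    conv_lhs => rw [hΨd]
    rw [Matrix.add_mul, Matrix.mul_assoc P (Ψ * P)ᵀ B2ᵀ, h2', Matrix.mul_one,
      Matrix.mul_assoc Pp (Ψ * Pp)ᵀ B2ᵀ]
  have key : B1 * (Φ * A * Ψᵀ) * B2ᵀ =
      Qᵀ * A * P + B1 * (Φ * Qp) * (Qpᵀ * A * P)
        + (Qᵀ * A * Pp) * (Ψ * Pp)ᵀ * B2ᵀ
        + B1 * (Φ * Qp) * (Qpᵀ * A * Pp) * (Ψ * Pp)ᵀ * B2ᵀ := by
    have : B1 * (Φ * A * Ψᵀ) * B2ᵀ = (B1 * Φ) * A * (Ψᵀ * B2ᵀ) := by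
      simp only [Matrix.mul_assoc]
    rw [this, hL, hR]
    simp only [Matrix.add_mul, Matrix.mul_add, Matrix.mul_assoc]
    abel
  rw [key]; abel
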